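/- (Bounded deviation for the y-iterates of NEAR-DGDᵗ) Suppose 0 < α < 1/L and y_{i,0} = s_0 for all i. Then for all k ≥ 1 and all i: ‖y_{i,k} − ȳ_k‖ ≤ βᵗ D + 2D, where ȳ_k = (1/n)Σ_i y_{i,k} and D = ‖y_0 − u*‖ + ((ν + 4)/ν)‖u*‖ with u* the concatenation of the minimizers u_i* of the f_i, ν = 2αγ, γ = min_i μ_i L_i/(μ_i + L_i). -/

import Mathlib

open Finset Filter

noncomputable section

/-- A block `ℝ^p` with the Euclidean norm. -/
abbrev Vec (p : ℕ) := EuclideanSpace ℝ (Fin p)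

/-- The concatenated space `ℝ^{np}` (n blocks of size p) with the Euclidean norm. -/
abbrev CVec (n p : ℕ) := PiLp 2 (fun _ : Fin n => Vec p)

/-- Action of the Kronecker product `W ⊗ I_p` on a concatenated vector of `ℝ^{np}`. -/
def kron {n p : ℕ} (W : Matrix (Fin n) (Fin n) ℝ) (x : CVec n p) : CVec n p :=
  WithLp.toLp 2 (fun i => ∑ j, W i j • x j)

/-- Concatenated gradient `∇f(x) = (∇f₁(x₁); …; ∇fₙ(xₙ))`. -/
def gradConcat {n p : ℕ} (f : Fin n → Vec p → ℝ) (x : CVec n p) : CVec n p :=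
  WithLp.toLp 2 (fun i => gradient (f i) (x i))

section AuxNearDGD

open Topology intervalIntegral

set_option linter.unusedSectionVars false

variable {E : Type*} [NormedAddCommGroup E] [InnerProductSpace ℝ E] [CompleteSpace E]

local notation "⟪" x ", " y "⟫" => @inner ℝ _ _ x y


lemma grad_inner (f : E → ℝ) (x v : E) : ⟪gradient f x, v⟫ = fderiv ℝ f x v := by
  have h : InnerProductSpace.toDual ℝ E (gradient f x) = fderiv ℝ f x :=
    LinearIsometryEquiv.apply_symm_apply _ _
  rw [← h, InnerProductSpace.toDual_apply_apply]

lemma line_hasDerivAt (f : E → ℝ) (hf : Differentiable ℝ f) (z d : E) (s : ℝ) :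
    HasDerivAt (fun s : ℝ => f (z + s • d)) ⟪gradient f (z + s • d), d⟫ s := by
  have hc : HasDerivAt (fun s : ℝ => z + s • d) d s := by
    simpa using ((hasDerivAt_id s).smul_const d).const_add z
  have := ((hf (z + s • d)).hasFDerivAt).comp_hasDerivAt s hc
  rw [grad_inner]; exact this

/-- first-order condition for convexity -/
lemma convex_grad_ineq (f : E → ℝ) (hc : ConvexOn ℝ Set.univ f) (hf : Differentiable ℝ f)
    (z w : E) : f z + ⟪gradient f z, w - z⟫ ≤ f w := by
  set d := w - z with hd
  set φ : ℝ → ℝ := fun s => f (z + s • d) with hφ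
  have hder : HasDerivAt φ ⟪gradient f z, d⟫ 0 := by
    simpa using line_hasDerivAt f hf z d 0
  have hslope : Tendsto (slope φ 0) (𝓝[>] 0) (𝓝 ⟪gradient f z, d⟫) :=
    (hasDerivAt_iff_tendsto_slope.1 hder).mono_left
      (nhdsWithin_mono 0 (fun s hs => ne_of_gt hs))
  have hbound : ∀ s ∈ Set.Ioc (0:ℝ) 1, slope φ 0 s ≤ f w - f z := by
    intro s hs
    have h1 : φ s ≤ (1 - s) * f z + s * f w := by
      have := hc.2 (Set.mem_univ z) (Set.mem_univ w) (by linarith [hs.2] : (0:ℝ) ≤ 1 - s)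
        hs.1.le (by ring)
      calc φ s = f ((1 - s) • z + s • w) := by
                  simp only [hφ]; congr 1
                  rw [hd]; module
        _ ≤ (1 - s) * f z + s * f w := by simpa using this
    have hφ0 : φ 0 = f z := by simp [hφ]
    rw [slope_def_field, div_le_iff₀ (by linarith [hs.1] : (0:ℝ) < s - 0)]
    nlinarith [hs.1]
  have : ⟪gradient f z, d⟫ ≤ f w - f z := by
    refine le_of_tendsto hslope ?_
    filter_upwards [Ioc_mem_nhdsGT_of_mem (by norm_num : (0:ℝ) ∈ Set.Ico (0:ℝ) 1)] with s hs
    exact hbound s hs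
  linarith
/-- Descent lemma: quadratic upper bound from Lipschitz gradient. -/
lemma descent_lemma (f : E → ℝ) (hf : Differentiable ℝ f) (K : ℝ) (hK : 0 ≤ K)
    (hLip : LipschitzWith K.toNNReal (fun v => gradient f v)) (z w : E) :
    f w ≤ f z + ⟪gradient f z, w - z⟫ + K / 2 * ‖w - z‖ ^ 2 := by
  set d := w - z with hd
  set φ : ℝ → ℝ := fun s => f (z + s • d) with hφ
  set φ' : ℝ → ℝ := fun s => ⟪gradient f (z + s • d), d⟫ with hφ'
  have hder : ∀ s ∈ Set.uIcc (0:ℝ) 1, HasDerivAt φ (φ' s) s := fun s _ =>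
    line_hasDerivAt f hf z d s
  have hcont : Continuous φ' := by
    apply Continuous.inner
    · exact hLip.continuous.comp (by continuity)
    · exact continuous_const
  have hFTC : ∫ s in (0:ℝ)..1, φ' s = φ 1 - φ 0 :=
    integral_eq_sub_of_hasDerivAt hder (hcont.intervalIntegrable 0 1)
  have hb : ∀ s ∈ Set.Icc (0:ℝ) 1, φ' s ≤ φ' 0 + K * ‖d‖ ^ 2 * s := by
    intro s hs
    have h1 : φ' s - φ' 0 = ⟪gradient f (z + s • d) - gradient f z, d⟫ := by
      simp [hφ', inner_sub_left]
    have h2 : ‖gradient f (z + s • d) - gradient f z‖ ≤ K * s * ‖d‖ := by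
      have := hLip.dist_le_mul (z + s • d) z
      rw [dist_eq_norm] at this
      have he : ‖z + s • d - z‖ = s * ‖d‖ := by
        rw [add_sub_cancel_left, norm_smul, Real.norm_eq_abs, abs_of_nonneg hs.1]
      rw [Real.coe_toNNReal _ hK, dist_eq_norm, he] at this
      calc ‖gradient f (z + s • d) - gradient f z‖ ≤ K * (s * ‖d‖) := this
        _ = K * s * ‖d‖ := by ring
    have h3 : ⟪gradient f (z + s • d) - gradient f z, d⟫ ≤ K * s * ‖d‖ * ‖d‖ :=
      (real_inner_le_norm _ _).trans (by
        apply mul_le_mul_of_nonneg_right h2 (norm_nonneg _))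
    nlinarith [h3]
  have hint : ∫ s in (0:ℝ)..1, φ' s ≤ ∫ s in (0:ℝ)..1, (φ' 0 + K * ‖d‖ ^ 2 * s) := by
    apply integral_mono_on (by norm_num) (hcont.intervalIntegrable 0 1)
      ((continuous_const.add (continuous_const.mul continuous_id)).intervalIntegrable 0 1)
    exact hb
  have hval : ∫ s in (0:ℝ)..1, (φ' 0 + K * ‖d‖ ^ 2 * s) = φ' 0 + K / 2 * ‖d‖ ^ 2 := by
    have h1 : IntervalIntegrable (fun s : ℝ => K * ‖d‖ ^ 2 * s) MeasureTheory.volume 0 1 :=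
      Continuous.intervalIntegrable (by continuity) 0 1
    rw [integral_add intervalIntegrable_const h1, integral_const_mul, integral_id]
    simp
    ring
  have hφ0 : φ 0 = f z := by simp [hφ]
  have hφ1 : φ 1 = f w := by simp [hφ, hd]
  have hφ'0 : φ' 0 = ⟪gradient f z, d⟫ := by simp [hφ']
  rw [hφ0, hφ1] at hFTC
  rw [hval, hφ'0] at hint
  linarith [hFTC ▸ hint]

lemma hasGradientAt_inner_const (c x : E) : HasGradientAt (fun v => ⟪c, v⟫) c x := by
  rw [hasGradientAt_iff_hasFDerivAt]
  have h : (InnerProductSpace.toDual ℝ E c : E →L[ℝ] ℝ) = innerSL ℝ c := by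
    ext v; simp [InnerProductSpace.toDual_apply_apply]
  rw [h]
  exact (innerSL ℝ c).hasFDerivAt

lemma hasGradientAt_norm_sq (m : ℝ) (x : E) :
    HasGradientAt (fun v : E => m / 2 * ‖v‖ ^ 2) (m • x) x := by
  rw [hasGradientAt_iff_hasFDerivAt]
  have h := ((hasStrictFDerivAt_norm_sq x).hasFDerivAt).const_mul (m / 2)
  refine h.congr_fderiv ?_
  ext v
  simp [InnerProductSpace.toDual_apply_apply, real_inner_smul_left]
  ring

lemma HasGradientAt.sub' {f g : E → ℝ} {a b x : E} (hf : HasGradientAt f a x)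
    (hg : HasGradientAt g b x) : HasGradientAt (fun v => f v - g v) (a - b) x := by
  rw [hasGradientAt_iff_hasFDerivAt] at *
  have := hf.sub hg
  rw [map_sub]; exact this

lemma gradient_sub_inner (g : E → ℝ) (hg : Differentiable ℝ g) (c v : E) :
    gradient (fun u => g u - ⟪c, u⟫) v = gradient g v - c :=
  HasGradientAt.gradient (((hg v).hasGradientAt).sub' (hasGradientAt_inner_const c v))

lemma gradient_sub_norm_sq (g : E → ℝ) (hg : Differentiable ℝ g) (m : ℝ) (v : E) :
    gradient (fun u => g u - m / 2 * ‖u‖ ^ 2) v = gradient g v - m • v :=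
  HasGradientAt.gradient (((hg v).hasGradientAt).sub' (hasGradientAt_norm_sq m v))

lemma diff_sub_inner (g : E → ℝ) (hg : Differentiable ℝ g) (c : E) :
    Differentiable ℝ (fun u => g u - ⟪c, u⟫) := fun v =>
  (((hg v).hasGradientAt).sub' (hasGradientAt_inner_const c v)).differentiableAt

lemma diff_sub_norm_sq (g : E → ℝ) (hg : Differentiable ℝ g) (m : ℝ) :
    Differentiable ℝ (fun u => g u - m / 2 * ‖u‖ ^ 2) := fun v =>
  (((hg v).hasGradientAt).sub' (hasGradientAt_norm_sq m v)).differentiableAt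

lemma convexOn_sub_inner {g : E → ℝ} (hc : ConvexOn ℝ Set.univ g) (c : E) :
    ConvexOn ℝ Set.univ (fun u => g u - ⟪c, u⟫) := by
  refine ⟨convex_univ, fun u _ w _ a b ha hb hab => ?_⟩
  have h := hc.2 (Set.mem_univ u) (Set.mem_univ w) ha hb hab
  have h2 : ⟪c, a • u + b • w⟫ = a * ⟪c, u⟫ + b * ⟪c, w⟫ := by
    rw [inner_add_right, real_inner_smul_right, real_inner_smul_right]
  simp only [smul_eq_mul] at *
  rw [h2]
  linarith

/-- Cocoercivity of the gradient of a convex function satisfying a quadratic upper bound. -/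
lemma coco (g : E → ℝ) (hg : Differentiable ℝ g) (hc : ConvexOn ℝ Set.univ g) (K : ℝ) (hK : 0 < K)
    (hdesc : ∀ z w, g w ≤ g z + ⟪gradient g z, w - z⟫ + K / 2 * ‖w - z‖ ^ 2) (z w : E) :
    (1 / K) * ‖gradient g z - gradient g w‖ ^ 2 ≤ ⟪gradient g z - gradient g w, z - w⟫ := by
  have half : ∀ z w : E, g z + ⟪gradient g z, w - z⟫
      + 1 / (2 * K) * ‖gradient g w - gradient g z‖ ^ 2 ≤ g w := by
    intro z w
    set c := gradient g z with hc'
    set φ : E → ℝ := fun v => g v - ⟪c, v⟫ with hφ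
    have hφd : Differentiable ℝ φ := diff_sub_inner g hg c
    have hφgrad : ∀ v, gradient φ v = gradient g v - c := gradient_sub_inner g hg c
    have hφconv : ConvexOn ℝ Set.univ φ := convexOn_sub_inner hc c
    have hφdesc : ∀ v u : E, φ u ≤ φ v + ⟪gradient φ v, u - v⟫ + K / 2 * ‖u - v‖ ^ 2 := by
      intro v u
      have h := hdesc v u
      have h2 : ⟪gradient φ v, u - v⟫ = ⟪gradient g v, u - v⟫ - ⟪c, u - v⟫ := by
        rw [hφgrad, inner_sub_left]
      have h3 : ⟪c, u - v⟫ = ⟪c, u⟫ - ⟪c, v⟫ := inner_sub_right c u v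
      simp only [hφ]
      rw [h2, h3]
      linarith
    have hmin : ∀ v, φ z ≤ φ v := by
      intro v
      have h := convex_grad_ineq φ hφconv hφd z v
      rw [hφgrad] at h
      simpa [hc'] using h
    set D := gradient g w - c with hD
    have hkey := hφdesc w (w - (1 / K) • D)
    have h4 : (w - (1 / K) • D) - w = -((1 / K) • D) := by abel
    have h5 : ⟪gradient φ w, (w - (1 / K) • D) - w⟫ = -(1 / K) * ‖D‖ ^ 2 := by
      rw [hφgrad, ← hD, h4, inner_neg_right, real_inner_smul_right,
        real_inner_self_eq_norm_sq]
      ring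
    have h6 : ‖(w - (1 / K) • D) - w‖ ^ 2 = (1 / K) ^ 2 * ‖D‖ ^ 2 := by
      rw [h4, norm_neg, norm_smul, Real.norm_eq_abs, mul_pow, sq_abs]
    rw [h5, h6] at hkey
    have h7 := (hmin (w - (1 / K) • D)).trans hkey
    have h8 : φ z = g z - ⟪c, z⟫ := rfl
    have h9 : φ w = g w - ⟪c, w⟫ := rfl
    have h10 : ⟪c, w - z⟫ = ⟪c, w⟫ - ⟪c, z⟫ := inner_sub_right c w z
    have hKne : K ≠ 0 := ne_of_gt hK
    rw [h8, h9] at h7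
    have h11 : K / 2 * ((1 / K) ^ 2 * ‖D‖ ^ 2) - 1 / K * ‖D‖ ^ 2
        = -(1 / (2 * K) * ‖D‖ ^ 2) := by field_simp; ring
    rw [hc', h10]
    nlinarith [h7]
  have h1 := half z w
  have h2 := half w z
  have e1 : ⟪gradient g z, w - z⟫ = -⟪gradient g z, z - w⟫ := by
    rw [← inner_neg_right]; congr 1; abel
  have e2 : ‖gradient g w - gradient g z‖ = ‖gradient g z - gradient g w‖ := norm_sub_rev _ _
  have e3 : ⟪gradient g z - gradient g w, z - w⟫
      = ⟪gradient g z, z - w⟫ - ⟪gradient g w, z - w⟫ := inner_sub_left _ _ _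
  rw [e1, e2] at h1
  rw [e3]
  have hhalf : 1 / (2 * K) + 1 / (2 * K) = 1 / K := by
    field_simp
    norm_num
  have hq : 1 / (2 * K) * ‖gradient g z - gradient g w‖ ^ 2
      + 1 / (2 * K) * ‖gradient g z - gradient g w‖ ^ 2
      = 1 / K * ‖gradient g z - gradient g w‖ ^ 2 := by
    rw [← add_mul, hhalf]
  linarith [h1, h2]

/-- Strong monotonicity of the gradient of a strongly convex function. -/
lemma strong_mono (f : E → ℝ) (m : ℝ) (hsc : StrongConvexOn Set.univ m f)
    (hf : Differentiable ℝ f) (z w : E) :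
    m * ‖z - w‖ ^ 2 ≤ ⟪gradient f z - gradient f w, z - w⟫ := by
  set g : E → ℝ := fun v => f v - m / 2 * ‖v‖ ^ 2 with hg
  have hgc : ConvexOn ℝ Set.univ g := strongConvexOn_iff_convex.1 hsc
  have hgd : Differentiable ℝ g := diff_sub_norm_sq f hf m
  have hggrad : ∀ v, gradient g v = gradient f v - m • v := gradient_sub_norm_sq f hf m
  have h1 := convex_grad_ineq g hgc hgd z w
  have h2 := convex_grad_ineq g hgc hgd w z
  rw [hggrad] at h1 h2
  have hwz : (w - z : E) = -(z - w) := by abel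
  have e1 : ⟪gradient f z - m • z, w - z⟫
      = -(⟪gradient f z, z - w⟫ - m * ⟪z, z - w⟫) := by
    rw [hwz, inner_neg_right, inner_sub_left, real_inner_smul_left]
  have e2 : ⟪gradient f w - m • w, z - w⟫
      = ⟪gradient f w, z - w⟫ - m * ⟪w, z - w⟫ := by
    rw [inner_sub_left, real_inner_smul_left]
  have e3 : ⟪gradient f z - gradient f w, z - w⟫
      = ⟪gradient f z, z - w⟫ - ⟪gradient f w, z - w⟫ := inner_sub_left _ _ _
  have e4 : ⟪z, z - w⟫ - ⟪w, z - w⟫ = ‖z - w‖ ^ 2 := by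
    rw [← inner_sub_left, real_inner_self_eq_norm_sq]
  rw [e1] at h1
  rw [e2] at h2
  rw [e3]
  have e5 : m * (⟪z, z - w⟫ - ⟪w, z - w⟫) = m * ‖z - w‖ ^ 2 := by rw [e4]
  nlinarith [h1, h2, e5]

/-- Interpolation inequality for strongly convex functions with Lipschitz gradients. -/
lemma key_interp (f : E → ℝ) (m L : ℝ) (hm : 0 < m) (hmL : m ≤ L)
    (hsc : StrongConvexOn Set.univ m f) (hf : Differentiable ℝ f)
    (hLip : LipschitzWith L.toNNReal (fun v => gradient f v)) (z w : E) :
    m * L / (m + L) * ‖z - w‖ ^ 2 + 1 / (m + L) * ‖gradient f z - gradient f w‖ ^ 2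
      ≤ ⟪gradient f z - gradient f w, z - w⟫ := by
  have hL : (0:ℝ) < L := lt_of_lt_of_le hm hmL
  have hmL0 : (0:ℝ) < m + L := by linarith
  have hLipn : ‖gradient f z - gradient f w‖ ≤ L * ‖z - w‖ := by
    have := hLip.dist_le_mul z w
    rwa [Real.coe_toNNReal _ hL.le, dist_eq_norm, dist_eq_norm] at this
  rcases eq_or_lt_of_le hmL with hEq | hlt
  · -- m = L
    subst hEq
    have hsm := strong_mono f m hsc hf z w
    have hsq : ‖gradient f z - gradient f w‖ ^ 2 ≤ m ^ 2 * ‖z - w‖ ^ 2 := by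
      nlinarith [norm_nonneg (gradient f z - gradient f w), norm_nonneg (z - w), hLipn]
    have e1 : m * m / (m + m) = m / 2 := by field_simp; ring
    have e2 : 1 / (m + m) * ‖gradient f z - gradient f w‖ ^ 2
        ≤ m / 2 * ‖z - w‖ ^ 2 := by
      rw [div_mul_eq_mul_div, div_le_iff₀ (by linarith : (0:ℝ) < m + m)]
      nlinarith [hsq]
    rw [e1]
    nlinarith [hsm, e2]
  · -- m < L
    set K := L - m with hK
    have hK0 : (0:ℝ) < K := by simp [hK]; linarith
    set g : E → ℝ := fun v => f v - m / 2 * ‖v‖ ^ 2 with hg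
    have hgc : ConvexOn ℝ Set.univ g := strongConvexOn_iff_convex.1 hsc
    have hgd : Differentiable ℝ g := diff_sub_norm_sq f hf m
    have hggrad : ∀ v, gradient g v = gradient f v - m • v := gradient_sub_norm_sq f hf m
    have hfdesc := descent_lemma f hf L hL.le hLip
    have hgdesc : ∀ v u : E, g u ≤ g v + ⟪gradient g v, u - v⟫ + K / 2 * ‖u - v‖ ^ 2 := by
      intro v u
      have h1 := hfdesc v u
      have hid : ‖u‖ ^ 2 = ‖v‖ ^ 2 + 2 * ⟪v, u - v⟫ + ‖u - v‖ ^ 2 := by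
        have : (u : E) = v + (u - v) := by abel
        rw [this]
        rw [norm_add_sq_real]
        ring_nf
        rw [add_sub_cancel_left]
      have h2 : ⟪gradient g v, u - v⟫ = ⟪gradient f v, u - v⟫ - m * ⟪v, u - v⟫ := by
        rw [hggrad, inner_sub_left, real_inner_smul_left]
      simp only [hg]
      rw [h2]
      nlinarith [h1, hid]
    have hcoco := coco g hgd hgc K hK0 hgdesc z w
    set Δ := gradient f z - gradient f w with hΔ
    set d := z - w with hd
    have hgzw : gradient g z - gradient g w = Δ - m • d := by
      rw [hggrad, hggrad, hΔ, hd, smul_sub]; abel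
    rw [hgzw] at hcoco
    have e1 : ⟪Δ - m • d, d⟫ = ⟪Δ, d⟫ - m * ‖d‖ ^ 2 := by
      rw [inner_sub_left, real_inner_smul_left, real_inner_self_eq_norm_sq]
    have e2 : ‖Δ - m • d‖ ^ 2 = ‖Δ‖ ^ 2 - 2 * m * ⟪Δ, d⟫ + m ^ 2 * ‖d‖ ^ 2 := by
      rw [norm_sub_sq_real, real_inner_smul_right, norm_smul, Real.norm_eq_abs,
        mul_pow, sq_abs]
      ring
    rw [e1, e2] at hcoco
    have h3 : ‖Δ‖ ^ 2 - 2 * m * ⟪Δ, d⟫ + m ^ 2 * ‖d‖ ^ 2 ≤ K * (⟪Δ, d⟫ - m * ‖d‖ ^ 2) := by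
      have h4 := mul_le_mul_of_nonneg_left hcoco hK0.le
      have h5 : K * (1 / K * (‖Δ‖ ^ 2 - 2 * m * ⟪Δ, d⟫ + m ^ 2 * ‖d‖ ^ 2))
          = ‖Δ‖ ^ 2 - 2 * m * ⟪Δ, d⟫ + m ^ 2 * ‖d‖ ^ 2 := by
        field_simp
      linarith [h5 ▸ h4]
    have hmain : ‖Δ‖ ^ 2 + m * L * ‖d‖ ^ 2 ≤ (m + L) * ⟪Δ, d⟫ := by
      simp only [hK] at h3
      nlinarith [h3]
    have e3 : m * L / (m + L) * ‖d‖ ^ 2 + 1 / (m + L) * ‖Δ‖ ^ 2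
        = (m * L * ‖d‖ ^ 2 + ‖Δ‖ ^ 2) / (m + L) := by
      field_simp
    rw [e3, div_le_iff₀ hmL0]
    nlinarith [hmain]

/-- One gradient step contraction towards the minimizer. -/
lemma step_contract (f : E → ℝ) (m L : ℝ) (hm : 0 < m) (hmL : m ≤ L)
    (hsc : StrongConvexOn Set.univ m f) (hf : Differentiable ℝ f)
    (hLip : LipschitzWith L.toNNReal (fun v => gradient f v)) (u : E)
    (hu : gradient f u = 0) (α : ℝ) (hα : 0 < α) (hα2 : α ≤ 2 / (m + L)) (z : E) :
    ‖z - α • gradient f z - u‖ ^ 2 ≤ (1 - 2 * α * (m * L / (m + L))) * ‖z - u‖ ^ 2 := by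
  have hmL0 : (0:ℝ) < m + L := by linarith
  have hkey := key_interp f m L hm hmL hsc hf hLip z u
  rw [hu, sub_zero] at hkey
  set G := gradient f z with hG
  set d := z - u with hd
  have hexp : z - α • G - u = d - α • G := by rw [hd]; abel
  rw [hexp, norm_sub_sq_real, real_inner_smul_right, norm_smul, Real.norm_eq_abs,
    mul_pow, sq_abs, real_inner_comm]
  have k1 := mul_le_mul_of_nonneg_left hkey (by positivity : (0:ℝ) ≤ 2 * α)
  have k2 : α ^ 2 * ‖G‖ ^ 2 ≤ 2 * α * (1 / (m + L)) * ‖G‖ ^ 2 := by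
    have : α ^ 2 ≤ 2 * α * (1 / (m + L)) := by
      rw [le_div_iff₀ hmL0] at hα2
      rw [mul_one_div, le_div_iff₀ hmL0]
      nlinarith [hα, hα2]
    nlinarith [this, sq_nonneg ‖G‖]
  nlinarith [k1, k2]


lemma block_norm_le {n p : ℕ} (v : CVec n p) (i : Fin n) : ‖v i‖ ≤ ‖v‖ := by
  have h1 : ‖v i‖ ^ 2 ≤ ‖v‖ ^ 2 := by
    have hv : ‖v‖ ^ 2 = ∑ j, ‖v j‖ ^ 2 := PiLp.norm_sq_eq_of_L2 _ v
    rw [hv]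
    exact Finset.single_le_sum (f := fun j => ‖v j‖ ^ 2) (fun j _ => by positivity) (mem_univ i)
  have := Real.sqrt_le_sqrt h1
  rwa [Real.sqrt_sq (norm_nonneg _), Real.sqrt_sq (norm_nonneg _)] at this

lemma kron_norm_le {n p : ℕ} (M : Matrix (Fin n) (Fin n) ℝ) (hnn : ∀ i j, 0 ≤ M i j)
    (hrow : ∀ i, ∑ j, M i j = 1) (hcol : ∀ j, ∑ i, M i j = 1) (v : CVec n p) :
    ‖kron M v‖ ≤ ‖v‖ := by
  have hsq : ‖kron M v‖ ^ 2 ≤ ‖v‖ ^ 2 := by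
    have h1 : ‖kron M v‖ ^ 2 = ∑ i, ‖(kron M v) i‖ ^ 2 := PiLp.norm_sq_eq_of_L2 _ _
    have h2 : ‖v‖ ^ 2 = ∑ j, ‖v j‖ ^ 2 := PiLp.norm_sq_eq_of_L2 _ v
    rw [h1, h2]
    have hrowle : ∀ i, ‖(kron M v) i‖ ^ 2 ≤ ∑ j, M i j * ‖v j‖ ^ 2 := by
      intro i
      have htri : ‖(kron M v) i‖ ≤ ∑ j, M i j * ‖v j‖ := by
        show ‖∑ j, M i j • v j‖ ≤ _
        refine (norm_sum_le _ _).trans (le_of_eq ?_)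
        refine Finset.sum_congr rfl fun j _ => ?_
        rw [norm_smul, Real.norm_eq_abs, abs_of_nonneg (hnn i j)]
      have hcs : (∑ j, M i j * ‖v j‖) ^ 2 ≤ ∑ j, M i j * ‖v j‖ ^ 2 := by
        have h := Finset.sum_mul_sq_le_sq_mul_sq Finset.univ
          (fun j => Real.sqrt (M i j)) (fun j => Real.sqrt (M i j) * ‖v j‖)
        have e1 : ∀ j : Fin n, Real.sqrt (M i j) * (Real.sqrt (M i j) * ‖v j‖)
            = M i j * ‖v j‖ := fun j => by
          rw [← mul_assoc, Real.mul_self_sqrt (hnn i j)]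
        have e2 : ∀ j : Fin n, Real.sqrt (M i j) ^ 2 = M i j := fun j =>
          Real.sq_sqrt (hnn i j)
        have e3 : ∀ j : Fin n, (Real.sqrt (M i j) * ‖v j‖) ^ 2 = M i j * ‖v j‖ ^ 2 :=
          fun j => by rw [mul_pow, e2]
        simp only [e1, e2, e3] at h
        rwa [hrow i, one_mul] at h
      calc ‖(kron M v) i‖ ^ 2 ≤ (∑ j, M i j * ‖v j‖) ^ 2 := by
            apply pow_le_pow_left₀ (norm_nonneg _) htri
        _ ≤ ∑ j, M i j * ‖v j‖ ^ 2 := hcs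
    calc ∑ i, ‖(kron M v) i‖ ^ 2 ≤ ∑ i, ∑ j, M i j * ‖v j‖ ^ 2 :=
          Finset.sum_le_sum fun i _ => hrowle i
      _ = ∑ j, (∑ i, M i j) * ‖v j‖ ^ 2 := by
          rw [Finset.sum_comm]
          exact Finset.sum_congr rfl fun j _ => (Finset.sum_mul _ _ _).symm
      _ = ∑ j, ‖v j‖ ^ 2 := Finset.sum_congr rfl fun j _ => by rw [hcol j, one_mul]
  have := Real.sqrt_le_sqrt hsq
  rwa [Real.sqrt_sq (norm_nonneg _), Real.sqrt_sq (norm_nonneg _)] at this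

lemma kron_sub {n p : ℕ} (M : Matrix (Fin n) (Fin n) ℝ) (a b : CVec n p) :
    kron M (a - b) = kron M a - kron M b := by
  refine PiLp.ext fun i => ?_
  show ∑ j, M i j • (a j - b j) = (∑ j, M i j • a j) - ∑ j, M i j • b j
  rw [← Finset.sum_sub_distrib]
  exact Finset.sum_congr rfl fun j _ => smul_sub _ _ _

lemma pow_doubly_stochastic {n : ℕ} (W : Matrix (Fin n) (Fin n) ℝ)
    (hnn : ∀ i j, 0 ≤ W i j) (hrow : ∀ i, ∑ j, W i j = 1) (hcol : ∀ j, ∑ i, W i j = 1)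
    (t : ℕ) :
    (∀ i j, 0 ≤ (W ^ t) i j) ∧ (∀ i, ∑ j, (W ^ t) i j = 1) ∧
      (∀ j, ∑ i, (W ^ t) i j = 1) := by
  induction t with
  | zero =>
    refine ⟨fun i j => ?_, fun i => ?_, fun j => ?_⟩ <;>
      simp [Matrix.one_apply, Finset.sum_ite_eq, Finset.sum_ite_eq']
    split <;> norm_num
  | succ t ih =>
    obtain ⟨ih1, ih2, ih3⟩ := ih
    have hmul : ∀ i j, (W ^ (t + 1)) i j = ∑ k, (W ^ t) i k * W k j := by
      intro i j; rw [pow_succ, Matrix.mul_apply]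
    refine ⟨fun i j => ?_, fun i => ?_, fun j => ?_⟩
    · rw [hmul]
      exact Finset.sum_nonneg fun k _ => mul_nonneg (ih1 i k) (hnn k j)
    · simp only [hmul]
      rw [Finset.sum_comm]
      calc ∑ k, ∑ j, (W ^ t) i k * W k j = ∑ k, (W ^ t) i k * ∑ j, W k j := by
            exact Finset.sum_congr rfl fun k _ => (Finset.mul_sum _ _ _).symm
        _ = 1 := by simp only [hrow, mul_one]; exact ih2 i
    · simp only [hmul]
      rw [Finset.sum_comm]
      calc ∑ k, ∑ i, (W ^ t) i k * W k j = ∑ k, (∑ i, (W ^ t) i k) * W k j := by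
            exact Finset.sum_congr rfl fun k _ => (Finset.sum_mul _ _ _).symm
        _ = 1 := by simp only [ih3, one_mul]; exact hcol j

set_option maxHeartbeats 1000000

/-- Bounded deviation for the y-iterates of NEAR-DGDᵗ: if `0 < α < 1/L`
and `y_{i,0} = s₀` for all `i`, then for all `k ≥ 1` and all `i`:
`‖y_{i,k} − ȳ_k‖ ≤ βᵗD + 2D`. -/
theorem near_dgdt_bounded_deviation_y_iterates
    (n p t : ℕ) (hn : 1 ≤ n) (hp : 1 ≤ p) (ht : 1 ≤ t)
    -- local objective functions: μᵢ-strongly convex, differentiable,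
    -- with Lᵢ-Lipschitz gradients
    (f : Fin n → Vec p → ℝ) (μ Lc : Fin n → ℝ) (L : ℝ)
    (hμpos : ∀ i, 0 < μ i) (hLpos : ∀ i, 0 < Lc i)
    (hsc : ∀ i, StrongConvexOn Set.univ (μ i) (f i))
    (hdiff : ∀ i, Differentiable ℝ (f i))
    (hLip : ∀ i, LipschitzWith (Real.toNNReal (Lc i)) (fun z => gradient (f i) z))
    (hLmax : IsGreatest (Set.range Lc) L)
    -- u*: the concatenation of the unique minimizers uᵢ* of the fᵢ
    (ustar : CVec n p) (hustar : ∀ i, ∀ z, f i (ustar i) ≤ f i z)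
    -- W is symmetric, doubly stochastic, with eigenvalues in (−1, 1]
    (W : Matrix (Fin n) (Fin n) ℝ) (hWsymm : W.IsHermitian)
    (hrow : ∀ i, ∑ j, W i j = 1) (hcol : ∀ j, ∑ i, W i j = 1)
    (hWnn : ∀ i j, 0 ≤ W i j)
    (heig : ∀ i, hWsymm.eigenvalues i ∈ Set.Ioc (-1 : ℝ) 1)
    (hone : ∃! i, hWsymm.eigenvalues i = 1)
    -- β ∈ (0,1): the second largest magnitude of the eigenvalues of W
    (β : ℝ) (hβmem : β ∈ Set.Ioo (0 : ℝ) 1)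
    (hβ : IsGreatest {r : ℝ | ∃ i, hWsymm.eigenvalues i ≠ 1 ∧ r = |hWsymm.eigenvalues i|} β)
    -- stepsize 0 < α < 1/L
    (α : ℝ) (hα : 0 < α) (hαlt : α < 1 / L)
    -- NEAR-DGDᵗ iterates: x_k = Zᵗ y_k, y_{k+1} = x_k − α∇f(x_k), with y₀ = (s₀;…;s₀)
    (x y : ℕ → CVec n p)
    (hxdef : ∀ k, x k = kron (W ^ t) (y k))
    (hydef : ∀ k, y (k + 1) = x k - α • gradConcat f (x k))
    (s0 : Vec p) (hy0 : ∀ i, y 0 i = s0)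
    -- γ = minᵢ μᵢLᵢ/(μᵢ + Lᵢ), ν = 2αγ, and the bound D
    (γ ν D : ℝ)
    (hγ : IsLeast (Set.range fun i => μ i * Lc i / (μ i + Lc i)) γ)
    (hν : ν = 2 * α * γ)
    (hD : D = ‖y 0 - ustar‖ + ((ν + 4) / ν) * ‖ustar‖)
    -- the mean of the y-iterates
    (ybar : ℕ → Vec p) (hybar : ∀ k, ybar k = (n : ℝ)⁻¹ • ∑ i, y k i) :
    ∀ k, 1 ≤ k → ∀ i, ‖y k i - ybar k‖ ≤ β ^ t * D + 2 * D := by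
  obtain ⟨hLmem, hLub⟩ := hLmax
  obtain ⟨jL, hjL⟩ := hLmem
  have hL0 : (0:ℝ) < L := hjL ▸ hLpos jL
  have hαL : α * L < 1 := by
    rw [lt_div_iff₀ hL0] at hαlt; exact hαlt
  -- μ i ≤ Lc i
  have hμL : ∀ i, μ i ≤ Lc i := by
    intro i
    set e0 : Vec p := EuclideanSpace.single ⟨0, hp⟩ (1:ℝ) with he0d
    have he0 : ‖e0‖ = 1 := by
      rw [he0d, EuclideanSpace.norm_single, norm_one]
    have h1 := strong_mono (f i) (μ i) (hsc i) (hdiff i) e0 0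
    have hCS := real_inner_le_norm (gradient (f i) e0 - gradient (f i) 0) (e0 - 0)
    have hLipb : ‖gradient (f i) e0 - gradient (f i) 0‖ ≤ Lc i * ‖e0 - 0‖ := by
      have := (hLip i).dist_le_mul e0 0
      rwa [Real.coe_toNNReal _ (hLpos i).le, dist_eq_norm, dist_eq_norm] at this
    rw [sub_zero, he0] at h1 hCS hLipb
    nlinarith [h1, hCS, hLipb, norm_nonneg (gradient (f i) e0 - gradient (f i) 0)]
  -- γ facts
  obtain ⟨hγmem, hγlb⟩ := hγ
  obtain ⟨jγ, hjγ⟩ := hγmem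
  have hγpos : 0 < γ := by
    rw [← hjγ]; have := hμpos jγ; have := hLpos jγ; positivity
  have hγle : ∀ i, γ ≤ μ i * Lc i / (μ i + Lc i) := fun i => hγlb ⟨i, rfl⟩
  have hνpos : 0 < ν := by rw [hν]; positivity
  have hνlt : ν < 1 := by
    have h2 : μ jL * Lc jL / (μ jL + Lc jL) ≤ Lc jL / 2 := by
      rw [div_le_div_iff₀ (by have := hμpos jL; have := hLpos jL; positivity) two_pos]
      nlinarith [hμL jL, hμpos jL, hLpos jL]
    have h3 : γ ≤ L / 2 := by
      have := (hγle jL).trans h2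
      rwa [hjL] at this
    rw [hν]
    nlinarith [hα, hγpos]
  -- gradient vanishes at the minimizers
  have hgrad0 : ∀ i, gradient (f i) (ustar i) = 0 := by
    intro i
    have hmin : IsLocalMin (f i) (ustar i) :=
      Filter.Eventually.of_forall fun z => hustar i z
    have hfd := hmin.fderiv_eq_zero
    have hgd : gradient (f i) (ustar i)
        = (InnerProductSpace.toDual ℝ (Vec p)).symm (fderiv ℝ (f i) (ustar i)) := rfl
    rw [hgd, hfd, map_zero]
  -- per-block contraction
  have hcontr : ∀ (i : Fin n) (z : Vec p),
      ‖z - α • gradient (f i) z - ustar i‖ ^ 2 ≤ (1 - ν) * ‖z - ustar i‖ ^ 2 := by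
    intro i z
    have hLci : Lc i ≤ L := hLub ⟨i, rfl⟩
    have hsum0 : (0:ℝ) < μ i + Lc i := by have := hμpos i; have := hLpos i; positivity
    have hαle : α ≤ 2 / (μ i + Lc i) := by
      have h1 : (1:ℝ) / L ≤ 1 / Lc i := one_div_le_one_div_of_le (hLpos i) hLci
      have h2 : (1:ℝ) / Lc i ≤ 2 / (μ i + Lc i) := by
        rw [div_le_div_iff₀ (hLpos i) hsum0]
        nlinarith [hμL i, hLpos i]
      linarith [hαlt.le]
    have hstep := step_contract (f i) (μ i) (Lc i) (hμpos i) (hμL i) (hsc i) (hdiff i)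
      (hLip i) (ustar i) (hgrad0 i) α hα hαle z
    refine hstep.trans (mul_le_mul_of_nonneg_right ?_ (by positivity))
    have : ν ≤ 2 * α * (μ i * Lc i / (μ i + Lc i)) := by
      rw [hν]
      have := hγle i
      nlinarith [hα]
    linarith
  -- concatenated contraction
  have hy_norm : ∀ k, ‖y (k+1) - ustar‖ ^ 2 ≤ (1 - ν) * ‖x k - ustar‖ ^ 2 := by
    intro k
    have h1 : ‖y (k+1) - ustar‖ ^ 2 = ∑ i, ‖(y (k+1) - ustar) i‖ ^ 2 :=
      PiLp.norm_sq_eq_of_L2 _ _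
    have h2 : ‖x k - ustar‖ ^ 2 = ∑ i, ‖(x k - ustar) i‖ ^ 2 :=
      PiLp.norm_sq_eq_of_L2 _ _
    rw [h1, h2, Finset.mul_sum]
    refine Finset.sum_le_sum fun i _ => ?_
    have he : (y (k+1) - ustar) i = x k i - α • gradient (f i) (x k i) - ustar i := by
      rw [hydef k]; simp [gradConcat]
    rw [he]
    exact hcontr i (x k i)
  -- kron is nonexpansive
  obtain ⟨hWt_nn, hWt_row, hWt_col⟩ := pow_doubly_stochastic W hWnn hrow hcol t
  have hxbound : ∀ k, ‖x k - ustar‖ ≤ ‖y k - ustar‖ + 2 * ‖ustar‖ := by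
    intro k
    rw [hxdef k]
    have h1 : kron (W ^ t) (y k) - ustar
        = kron (W ^ t) (y k - ustar) + (kron (W ^ t) ustar - ustar) := by
      rw [kron_sub]; abel
    rw [h1]
    have h2 := kron_norm_le (W ^ t) hWt_nn hWt_row hWt_col (y k - ustar)
    have h3 := kron_norm_le (W ^ t) hWt_nn hWt_row hWt_col ustar
    calc ‖kron (W ^ t) (y k - ustar) + (kron (W ^ t) ustar - ustar)‖
        ≤ ‖kron (W ^ t) (y k - ustar)‖ + ‖kron (W ^ t) ustar - ustar‖ := norm_add_le _ _
      _ ≤ ‖y k - ustar‖ + (‖kron (W ^ t) ustar‖ + ‖ustar‖) :=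
          add_le_add h2 (norm_sub_le _ _)
      _ ≤ ‖y k - ustar‖ + 2 * ‖ustar‖ := by linarith
  -- the induction bound
  set U : ℝ := ‖ustar‖ with hU
  have hU0 : 0 ≤ U := norm_nonneg _
  set M : ℝ := ‖y 0 - ustar‖ + 4 / ν * U with hM
  have hM0 : 0 ≤ M := by
    rw [hM]; positivity
  set c : ℝ := Real.sqrt (1 - ν) with hc
  have hc0 : 0 ≤ c := Real.sqrt_nonneg _
  have hc2 : c ^ 2 = 1 - ν := Real.sq_sqrt (by linarith)
  have hcle : c ≤ 1 - ν / 2 := by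
    have h := Real.sqrt_le_sqrt (show 1 - ν ≤ (1 - ν / 2) ^ 2 by nlinarith)
    rwa [Real.sqrt_sq (by linarith)] at h
  have hystep : ∀ k, ‖y (k+1) - ustar‖ ≤ c * (‖y k - ustar‖ + 2 * U) := by
    intro k
    have h1 := hy_norm k
    have h2 : ‖x k - ustar‖ ^ 2 ≤ (‖y k - ustar‖ + 2 * U) ^ 2 :=
      pow_le_pow_left₀ (norm_nonneg _) (hxbound k) 2
    have h3 : ‖y (k+1) - ustar‖ ^ 2 ≤ (c * (‖y k - ustar‖ + 2 * U)) ^ 2 := by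
      rw [mul_pow, hc2]
      nlinarith [h1, h2, hνlt]
    have h4 := Real.sqrt_le_sqrt h3
    rwa [Real.sqrt_sq (norm_nonneg _), Real.sqrt_sq (by positivity)] at h4
  have hbound : ∀ k, ‖y k - ustar‖ ≤ M := by
    intro k
    induction k with
    | zero =>
      have hpos : 0 ≤ 4 / ν * U := by positivity
      rw [hM]; linarith
    | succ k ih =>
      have h1 := hystep k
      have h2 : c * (‖y k - ustar‖ + 2 * U) ≤ c * (M + 2 * U) :=
        mul_le_mul_of_nonneg_left (by linarith) hc0
      have h3 : c * (M + 2 * U) ≤ (1 - ν / 2) * (M + 2 * U) :=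
        mul_le_mul_of_nonneg_right hcle (by linarith)
      have hMU : 4 / ν * U ≤ M := by rw [hM]; nlinarith [norm_nonneg (y 0 - ustar)]
      have e : ν * (4 / ν * U) = 4 * U := by field_simp
      have h4 : (1 - ν / 2) * (M + 2 * U) ≤ M := by
        nlinarith [mul_le_mul_of_nonneg_left hMU hνpos.le, e, hU0, hνlt, hνpos, hM0]
      exact h1.trans (h2.trans (h3.trans h4))
  -- D = M + U
  have hDM : D = M + U := by
    rw [hD, hM, hU]
    have hfr : (ν + 4) / ν = 1 + 4 / ν := by field_simp
    rw [hfr]; ring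
  have hyk : ∀ k, ‖y k‖ ≤ D := by
    intro k
    have h1 : ‖y k‖ ≤ ‖y k - ustar‖ + U := by
      have e : y k = (y k - ustar) + ustar := by abel
      calc ‖y k‖ = ‖(y k - ustar) + ustar‖ := by rw [← e]
        _ ≤ ‖y k - ustar‖ + ‖ustar‖ := norm_add_le _ _
        _ = ‖y k - ustar‖ + U := by rw [hU]
    rw [hDM]
    have := hbound k
    linarith
  have hD0 : (0:ℝ) ≤ D := le_trans (norm_nonneg (y 0)) (hyk 0)
  intro k hk i
  have h1 : ‖y k i‖ ≤ D := (block_norm_le (y k) i).trans (hyk k)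
  have hn0 : (0:ℝ) < (n:ℝ) := by exact_mod_cast hn
  have h2 : ‖ybar k‖ ≤ D := by
    rw [hybar k]
    have hsum : ‖∑ j, y k j‖ ≤ (n:ℝ) * D := by
      refine (norm_sum_le _ _).trans ?_
      calc ∑ j, ‖y k j‖ ≤ ∑ _j : Fin n, D :=
            Finset.sum_le_sum fun j _ => (block_norm_le (y k) j).trans (hyk k)
        _ = (n:ℝ) * D := by
            rw [Finset.sum_const, Finset.card_univ, Fintype.card_fin, nsmul_eq_mul]
    calc ‖(n:ℝ)⁻¹ • ∑ j, y k j‖ = (n:ℝ)⁻¹ * ‖∑ j, y k j‖ := by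
          rw [norm_smul, Real.norm_eq_abs, abs_of_nonneg (by positivity)]
      _ ≤ (n:ℝ)⁻¹ * ((n:ℝ) * D) :=
          mul_le_mul_of_nonneg_left hsum (by positivity)
      _ = D := by field_simp
  calc ‖y k i - ybar k‖ ≤ ‖y k i‖ + ‖ybar k‖ := norm_sub_le _ _
    _ ≤ D + D := add_le_add h1 h2
    _ ≤ β ^ t * D + 2 * D := by
        nlinarith [pow_nonneg hβmem.1.le t, hD0]
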